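/- The Petersen graph minus any single edge is nonplanar. -/

import Mathlib

open SimpleGraph

/-- `H` is a minor of `G`: disjoint connected branch sets in `G`, one for each vertex of `H`,
with edges of `H` realized by edges of `G` between the corresponding branch sets. -/
def MinorOf {W V : Type*} (H : SimpleGraph W) (G : SimpleGraph V) : Prop :=
  ∃ f : W → Set V,
    (∀ w, (G.induce (f w)).Connected) ∧
    (Pairwise fun w w' => Disjoint (f w) (f w')) ∧
    (∀ w w', H.Adj w w' → ∃ a ∈ f w, ∃ b ∈ f w', G.Adj a b)

/-- Planarity, via Wagner's theorem: no `K₅` minor and no `K₃,₃` minor. -/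
def IsPlanar {V : Type*} (G : SimpleGraph V) : Prop :=
  ¬ MinorOf (completeGraph (Fin 5)) G ∧
  ¬ MinorOf (completeBipartiteGraph (Fin 3) (Fin 3)) G

/-- `M` is a maximal planar subgraph of `G`: `M` is planar, and inserting any edge of `G`
not in `M` into `M` yields a nonplanar graph. -/
def MaximalPlanarSubgraph {V : Type*} (G : SimpleGraph V) (M : G.Subgraph) : Prop :=
  IsPlanar M.coe ∧
  ∀ ⦃u v : V⦄ (h : G.Adj u v), ¬ M.Adj u v →
    ¬ IsPlanar (M ⊔ G.subgraphOfAdj h).coe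

/-- `G` contains a copy of `H` as a subgraph. -/
def ContainsSubgraph {W V : Type*} (H : SimpleGraph W) (G : SimpleGraph V) : Prop :=
  ∃ f : W → V, Function.Injective f ∧ ∀ a b, H.Adj a b → G.Adj (f a) (f b)


/-- The Petersen graph: vertices are 2-element subsets of a 5-element set,
adjacent iff disjoint. -/
def Petersen : SimpleGraph {s : Finset (Fin 5) // s.card = 2} where
  Adj a b := Disjoint a.1 b.1
  symm := ⟨fun _ _ h => h.symm⟩
  loopless := by
    constructor
    intro a h
    have h1 : a.1 = ∅ := by simpa using disjoint_self.mp h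
    have h2 := a.2
    rw [h1] at h2
    simp at h2


/-! ### Auxiliary material -/


abbrev PV := {s : Finset (Fin 5) // s.card = 2}

instance : DecidableRel Petersen.Adj :=
  fun a b => inferInstanceAs (Decidable (Disjoint a.1 b.1))

/-- Minors transfer along graph isomorphisms. -/
lemma minorOf_of_iso {W V V' : Type*} {H : SimpleGraph W} {G : SimpleGraph V}
    {G' : SimpleGraph V'} (φ : G ≃g G') (h : MinorOf H G) : MinorOf H G' := by
  obtain ⟨f, hconn, hdisj, hadj⟩ := h
  refine ⟨fun w => φ '' f w, ?_, ?_, ?_⟩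
  · intro w
    have iso : G.induce (f w) ≃g G'.induce (φ '' f w) := by
      refine ⟨Equiv.Set.image φ (f w) φ.injective, ?_⟩
      intro a b
      simpa using φ.map_adj_iff
    exact iso.connected_iff.mp (hconn w)
  · intro w w' hne
    exact (Set.disjoint_image_iff φ.injective).mpr (hdisj hne)
  · intro w w' hww'
    obtain ⟨a, ha, b, hb, hab⟩ := hadj w w' hww'
    exact ⟨φ a, Set.mem_image_of_mem _ ha, φ b, Set.mem_image_of_mem _ hb,
      φ.map_adj_iff.mpr hab⟩

def vEquiv (σ : Equiv.Perm (Fin 5)) : PV ≃ PV :=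
  σ.finsetCongr.subtypeEquiv (fun s => by simp)

def permIso (σ : Equiv.Perm (Fin 5)) : Petersen ≃g Petersen where
  toEquiv := vEquiv σ
  map_rel_iff' := by
    intro a b
    show Disjoint _ _ ↔ Disjoint _ _
    simp [vEquiv, Finset.disjoint_map]

/-- An automorphism taking a deleted edge to another gives an iso of edge-deleted graphs. -/
def deleteEdgesIso {V : Type*} {G : SimpleGraph V} (φ : G ≃g G) (e : Sym2 V) :
    G.deleteEdges {e} ≃g G.deleteEdges {Sym2.map φ e} where
  toEquiv := φ.toEquiv
  map_rel_iff' := by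
    intro a b
    simp only [deleteEdges_adj, Set.mem_singleton_iff]
    rw [show s((φ.toEquiv a : V), (φ.toEquiv b : V)) = Sym2.map φ s(a, b) from rfl]
    constructor
    · rintro ⟨h1, h2⟩
      exact ⟨φ.map_adj_iff.mp h1, fun h => h2 (by rw [h])⟩
    · rintro ⟨h1, h2⟩
      exact ⟨φ.map_adj_iff.mpr h1, fun h => h2 (Sym2.map.injective φ.injective h)⟩

def e0 : Sym2 PV := s(⟨{0,1}, by decide⟩, ⟨{2,3}, by decide⟩)

lemma exists_perm : ∀ a b : PV, Petersen.Adj a b →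
    ∃ σ : Equiv.Perm (Fin 5), Sym2.map (vEquiv σ) e0 = s(a, b) := by
  decide

lemma induce_singleton_connected {V : Type*} (G : SimpleGraph V) (v : V) :
    (G.induce {v}).Connected := by
  haveI : Nonempty ({v} : Set V) := ⟨⟨v, rfl⟩⟩
  refine ⟨fun a b => ?_⟩
  obtain ⟨a, ha⟩ := a
  obtain ⟨b, hb⟩ := b
  simp only [Set.mem_singleton_iff] at ha hb
  subst ha; subst hb
  rfl

lemma induce_pair_connected {V : Type*} (G : SimpleGraph V) {u v : V} (h : G.Adj u v) :
    (G.induce {u, v}).Connected := by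
  haveI : Nonempty ({u, v} : Set V) := ⟨⟨u, by simp⟩⟩
  have key : ∀ x : ({u, v} : Set V), (G.induce {u, v}).Reachable ⟨u, by simp⟩ x := by
    rintro ⟨x, hx⟩
    simp only [Set.mem_insert_iff, Set.mem_singleton_iff] at hx
    rcases hx with rfl | rfl
    · rfl
    · exact Adj.reachable (by exact h)
  exact ⟨fun a b => (key a).symm.trans (key b)⟩

def v01 : PV := ⟨{0,1}, by decide⟩
def v02 : PV := ⟨{0,2}, by decide⟩
def v03 : PV := ⟨{0,3}, by decide⟩
def v04 : PV := ⟨{0,4}, by decide⟩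
def v12 : PV := ⟨{1,2}, by decide⟩
def v13 : PV := ⟨{1,3}, by decide⟩
def v14 : PV := ⟨{1,4}, by decide⟩
def v24 : PV := ⟨{2,4}, by decide⟩
def v34 : PV := ⟨{3,4}, by decide⟩

def bf : Fin 3 ⊕ Fin 3 → Set PV :=
  Sum.elim ![{v02, v14}, {v12, v12}, {v01, v24}] ![{v04, v13}, {v34, v34}, {v03, v03}]

/-- The explicit K₃,₃ minor in `Petersen.deleteEdges {e0}`. -/
lemma base_minor : MinorOf (completeBipartiteGraph (Fin 3) (Fin 3))
    (Petersen.deleteEdges {e0}) := by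
  have hDel : ∀ a b : PV, Petersen.Adj a b → s(a, b) ≠ e0 →
      (Petersen.deleteEdges {e0}).Adj a b := by
    intro a b h1 h2
    rw [deleteEdges_adj]
    exact ⟨h1, by simpa using h2⟩
  refine ⟨bf, ?_, ?_, ?_⟩
  · rintro (i | i) <;> fin_cases i
    · exact induce_pair_connected _ (hDel v02 v14 (by decide) (by decide))
    · show (_root_.SimpleGraph.induce ({v12, v12} : Set PV) _).Connected
      rw [Set.pair_eq_singleton]
      exact induce_singleton_connected _ _
    · exact induce_pair_connected _ (hDel v01 v24 (by decide) (by decide))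
    · exact induce_pair_connected _ (hDel v04 v13 (by decide) (by decide))
    · show (_root_.SimpleGraph.induce ({v34, v34} : Set PV) _).Connected
      rw [Set.pair_eq_singleton]
      exact induce_singleton_connected _ _
    · show (_root_.SimpleGraph.induce ({v03, v03} : Set PV) _).Connected
      rw [Set.pair_eq_singleton]
      exact induce_singleton_connected _ _
  · rintro (i | i) (j | j) hne <;> fin_cases i <;> fin_cases j <;>
      first
        | exact absurd rfl hne
        | (refine Set.disjoint_left.mpr ?_; intro x hx hy;
           simp only [bf, Sum.elim_inl, Sum.elim_inr, Matrix.cons_val_zero,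
             Matrix.cons_val_one, Matrix.head_cons, Matrix.cons_val_two, Matrix.tail_cons,
             Set.mem_insert_iff, Set.mem_singleton_iff] at hx hy;
           rcases hx with rfl | rfl <;> rcases hy with h | h <;> exact absurd h (by decide))
  · rintro (i | i) (j | j) hadj
    · exact absurd hadj (by simp)
    rotate_left 2
    · exact absurd hadj (by simp)
    -- inl i, inr j cases
    fin_cases i <;> fin_cases j
    · exact ⟨v02, by simp [bf], v13, by simp [bf], hDel _ _ (by decide) (by decide)⟩
    · exact ⟨v02, by simp [bf], v34, by simp [bf], hDel _ _ (by decide) (by decide)⟩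
    · exact ⟨v14, by simp [bf], v03, by simp [bf], hDel _ _ (by decide) (by decide)⟩
    · exact ⟨v12, by simp [bf], v04, by simp [bf], hDel _ _ (by decide) (by decide)⟩
    · exact ⟨v12, by simp [bf], v34, by simp [bf], hDel _ _ (by decide) (by decide)⟩
    · exact ⟨v12, by simp [bf], v03, by simp [bf], hDel _ _ (by decide) (by decide)⟩
    · exact ⟨v24, by simp [bf], v13, by simp [bf], hDel _ _ (by decide) (by decide)⟩
    · exact ⟨v01, by simp [bf], v34, by simp [bf], hDel _ _ (by decide) (by decide)⟩
    · exact ⟨v24, by simp [bf], v03, by simp [bf], hDel _ _ (by decide) (by decide)⟩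
    -- inr i, inl j cases (swapped)
    fin_cases i <;> fin_cases j
    · exact ⟨v13, by simp [bf], v02, by simp [bf], hDel _ _ (by decide) (by decide)⟩
    · exact ⟨v04, by simp [bf], v12, by simp [bf], hDel _ _ (by decide) (by decide)⟩
    · exact ⟨v13, by simp [bf], v24, by simp [bf], hDel _ _ (by decide) (by decide)⟩
    · exact ⟨v34, by simp [bf], v02, by simp [bf], hDel _ _ (by decide) (by decide)⟩
    · exact ⟨v34, by simp [bf], v12, by simp [bf], hDel _ _ (by decide) (by decide)⟩
    · exact ⟨v34, by simp [bf], v01, by simp [bf], hDel _ _ (by decide) (by decide)⟩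
    · exact ⟨v03, by simp [bf], v14, by simp [bf], hDel _ _ (by decide) (by decide)⟩
    · exact ⟨v03, by simp [bf], v12, by simp [bf], hDel _ _ (by decide) (by decide)⟩
    · exact ⟨v03, by simp [bf], v24, by simp [bf], hDel _ _ (by decide) (by decide)⟩

/-- The Petersen graph minus any single edge is nonplanar. -/
theorem petersen_minus_edge_nonplanar (e : Sym2 {s : Finset (Fin 5) // s.card = 2})
    (he : e ∈ Petersen.edgeSet) :
    ¬ IsPlanar (Petersen.deleteEdges {e}) := by
  intro hpl
  apply hpl.2
  induction e with
  | _ a b =>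
    rw [mem_edgeSet] at he
    obtain ⟨σ, hσ⟩ := exists_perm a b he
    exact minorOf_of_iso (hσ ▸ deleteEdgesIso (permIso σ) e0) base_minor
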